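/- Consider the input affine system ẋ = f(x) + g(x)u, y = h(x). Suppose V : ℝⁿ → ℝ is differentiable with V(x) ≥ 0 for all x and V(0) = 0, and suppose the differential dissipation inequality ∇V(x)ᵀ (f(x) + g(x)u) ≤ ω(u, ẏ) holds for all x, u ∈ ℝⁿ, where ẏ = ∇h(x)ᵀ (f(x) + g(x)u). Then there exist an integer q ≥ 1 and functions L : ℝⁿ → ℝ^q and W : ℝⁿ → ℝ^{q×n} such that for all x ∈ ℝⁿ: (i) (1/2) g(x)ᵀ∇V(x) = Ŝ(x)ᵀ f(x) − W(x)ᵀ L(x), (ii) ∇V(x)ᵀ f(x) = f(x)ᵀ ∇h(x) Q ∇h(x)ᵀ f(x) − L(x)ᵀ L(x), and (iii) W(x)ᵀ W(x) equals the symmetric part of R̂(x), where Ŝ(x) = ∇h(x) Q ∇h(x)ᵀ g(x) + ∇h(x) S and R̂(x) = g(x)ᵀ ∇h(x) Q ∇h(x)ᵀ g(x) + 2 g(x)ᵀ ∇h(x) S + R. -/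

import Mathlib

open Matrix


lemma dot_symm {n : ℕ} (v w : Fin n → ℝ) (M : Matrix (Fin n) (Fin n) ℝ) :
    v ⬝ᵥ (M *ᵥ w) = w ⬝ᵥ (Mᵀ *ᵥ v) := by
  rw [Matrix.dotProduct_mulVec, Matrix.mulVec_transpose, dotProduct_comm]

lemma mulVec_dot {n : ℕ} (a b : Fin n → ℝ) (N : Matrix (Fin n) (Fin n) ℝ) :
    (N *ᵥ a) ⬝ᵥ b = a ⬝ᵥ (Nᵀ *ᵥ b) := by
  rw [dotProduct_comm, dot_symm]

lemma expand_eq {n : ℕ} (F p u : Fin n → ℝ) (G H Q S R : Matrix (Fin n) (Fin n) ℝ)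
    (hQ : Qᵀ = Q) :
    ((Hᵀ *ᵥ (F + G *ᵥ u)) ⬝ᵥ (Q *ᵥ (Hᵀ *ᵥ (F + G *ᵥ u)))
        + 2 * ((Hᵀ *ᵥ (F + G *ᵥ u)) ⬝ᵥ (S *ᵥ u)) + u ⬝ᵥ (R *ᵥ u))
      - p ⬝ᵥ (F + G *ᵥ u)
    = (F ⬝ᵥ ((H * Q * Hᵀ) *ᵥ F) - p ⬝ᵥ F)
      + 2 * ((((H * Q * Hᵀ * G + H * S)ᵀ *ᵥ F) - (1/2 : ℝ) • (Gᵀ *ᵥ p)) ⬝ᵥ u)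
      + u ⬝ᵥ (((1/2 : ℝ) • ((Gᵀ * H * Q * Hᵀ * G + (2:ℝ) • (Gᵀ * H * S) + R)
          + (Gᵀ * H * Q * Hᵀ * G + (2:ℝ) • (Gᵀ * H * S) + R)ᵀ)) *ᵥ u) := by
  have h3 : u ⬝ᵥ ((Gᵀ * (H * (Q * Hᵀ))) *ᵥ F) = F ⬝ᵥ ((H * (Q * (Hᵀ * G))) *ᵥ u) := by
    rw [dot_symm]
    simp [Matrix.transpose_mul, Matrix.mul_assoc, hQ]
  have h6 : u ⬝ᵥ ((Sᵀ * (Hᵀ * G)) *ᵥ u) = u ⬝ᵥ ((Gᵀ * (H * S)) *ᵥ u) := by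
    rw [dot_symm]
    simp [Matrix.transpose_mul, Matrix.mul_assoc]
  have h7 : u ⬝ᵥ (Rᵀ *ᵥ u) = u ⬝ᵥ (R *ᵥ u) := by
    rw [dot_symm, Matrix.transpose_transpose, dotProduct_comm]
  simp only [Matrix.mulVec_add, Matrix.add_mulVec, add_dotProduct,
    dotProduct_add, sub_dotProduct, smul_dotProduct,
    dotProduct_smul, Matrix.smul_mulVec, Matrix.transpose_add,
    Matrix.transpose_mul, Matrix.transpose_transpose, Matrix.transpose_smul,
    Matrix.mulVec_mulVec, mulVec_dot, hQ, Matrix.mul_assoc, smul_eq_mul]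
  linarith [h3, h6, h7]

lemma quad_coeff_nonneg' {a b c : ℝ} (h : ∀ s : ℝ, 0 ≤ a * s^2 + 2*b*s + c) : 0 ≤ a := by
  by_contra ha
  push_neg at ha
  have ha' : (0:ℝ) < -a := by linarith
  have hs : 0 ≤ (|c|+1)/(-a) := by positivity
  set s := Real.sqrt ((|c|+1)/(-a)) with hsdef
  have hsq : s^2 = (|c|+1)/(-a) := Real.sq_sqrt hs
  have key : a * s^2 = -(|c|+1) := by
    rw [hsq]
    field_simp [ha.ne]
  have h1 := h s
  have h2 := h (-s)
  have := le_abs_self c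
  nlinarith

lemma cons_quadform' {n : ℕ} (c : ℝ) (b : Fin n → ℝ) (A : Matrix (Fin n) (Fin n) ℝ)
    (t : ℝ) (u : Fin n → ℝ) :
    (Fin.cons t u : Fin (n+1) → ℝ) ⬝ᵥ
      ((Matrix.of (Fin.cons (Fin.cons c b) (fun i => Fin.cons (b i) (A i)))) *ᵥ (Fin.cons t u))
    = c * t^2 + 2 * (b ⬝ᵥ u) * t + u ⬝ᵥ (A *ᵥ u) := by
  simp [dotProduct, Matrix.mulVec, Fin.sum_univ_succ, Finset.mul_sum,
    Finset.sum_mul, mul_add, add_mul, mul_comm, mul_assoc, mul_left_comm]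
  ring_nf
  rw [Finset.sum_add_distrib, ← Finset.sum_mul]
  ring

lemma exists_factorization {n : ℕ} (cc : ℝ) (bb : Fin n → ℝ) (AA : Matrix (Fin n) (Fin n) ℝ)
    (hAsymm : AAᵀ = AA)
    (hkey : ∀ u : Fin n → ℝ, 0 ≤ cc + 2 * (bb ⬝ᵥ u) + u ⬝ᵥ (AA *ᵥ u)) :
    ∃ B : Matrix (Fin (n+1)) (Fin (n+1)) ℝ,
      (∑ k, B k 0 * B k 0) = cc ∧ (∀ j : Fin n, (∑ k, B k j.succ * B k 0) = bb j) ∧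
      (∀ i j : Fin n, (∑ k, B k i.succ * B k j.succ) = AA i j) := by
  set M : Matrix (Fin (n+1)) (Fin (n+1)) ℝ :=
    Matrix.of (Fin.cons (Fin.cons cc bb) (fun i => (Fin.cons (bb i) (AA i) : Fin (n+1) → ℝ)))
    with hM
  have hPSD : M.PosSemidef := by
    rw [Matrix.posSemidef_iff_dotProduct_mulVec]
    constructor
    · ext a b'
      simp only [Matrix.conjTranspose_apply, star_trivial, hM, Matrix.of_apply]
      refine Fin.cases ?_ (fun i => ?_) a
      · refine Fin.cases ?_ (fun j => ?_) b' <;> simp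
      · refine Fin.cases ?_ (fun j => ?_) b'
        · simp
        · simp only [Fin.cons_succ]
          exact congrFun (congrFun hAsymm i) j
    · intro v
      have hv := cons_quadform' cc bb AA (v 0) (Fin.tail v)
      rw [Fin.cons_self_tail] at hv
      have hstar : star v = v := funext fun i => star_trivial _
      rw [hstar, hv]
      set t := v 0 with htdef
      set u := Fin.tail v with hudef
      rcases eq_or_ne t 0 with ht | ht
      · rw [ht]
        simp only [mul_zero, zero_pow, add_zero, zero_add, ne_eq, OfNat.ofNat_ne_zero,
          not_false_eq_true, mul_zero]
        have : 0 ≤ u ⬝ᵥ (AA *ᵥ u) := by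
          apply quad_coeff_nonneg' (b := bb ⬝ᵥ u) (c := cc)
          intro s
          have h0 := hkey (s • u)
          have e1 : bb ⬝ᵥ (s • u) = s * (bb ⬝ᵥ u) := by
            simp [dotProduct_smul, smul_eq_mul]
          have e2 : (s • u) ⬝ᵥ (AA *ᵥ (s • u)) = s * (s * (u ⬝ᵥ (AA *ᵥ u))) := by
            rw [Matrix.mulVec_smul]
            simp [smul_dotProduct, dotProduct_smul, smul_eq_mul]
          rw [e1, e2] at h0
          ring_nf at h0 ⊢
          linarith
        linarith
      · have h0 := hkey (t⁻¹ • u)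
        have e1 : bb ⬝ᵥ (t⁻¹ • u) = t⁻¹ * (bb ⬝ᵥ u) := by
          simp [dotProduct_smul, smul_eq_mul]
        have e2 : (t⁻¹ • u) ⬝ᵥ (AA *ᵥ (t⁻¹ • u)) = t⁻¹ * (t⁻¹ * (u ⬝ᵥ (AA *ᵥ u))) := by
          rw [Matrix.mulVec_smul]
          simp [smul_dotProduct, dotProduct_smul, smul_eq_mul]
        rw [e1, e2] at h0
        have heq : cc * t^2 + 2 * (bb ⬝ᵥ u) * t + u ⬝ᵥ (AA *ᵥ u)
            = t^2 * (cc + 2 * (t⁻¹ * (bb ⬝ᵥ u)) + t⁻¹ * (t⁻¹ * (u ⬝ᵥ (AA *ᵥ u)))) := by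
          field_simp
        rw [heq]
        exact mul_nonneg (sq_nonneg t) h0
  obtain ⟨B, hB⟩ : ∃ B : Matrix (Fin (n+1)) (Fin (n+1)) ℝ, M = Bᴴ * B := by
    open scoped MatrixOrder in
    exact CStarAlgebra.nonneg_iff_eq_star_mul_self.mp hPSD.nonneg
  have hMab : ∀ a b', M a b' = ∑ k, B k a * B k b' := by
    intro a b'
    rw [hB]
    simp [Matrix.mul_apply, Matrix.conjTranspose_apply]
  refine ⟨B, ?_, fun j => ?_, fun i j => ?_⟩
  · rw [← hMab]
    simp [hM]
  · rw [← hMab]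
    simp [hM]
  · rw [← hMab]
    simp [hM]

/-- For the input affine system ẋ = f(x) + g(x)u, y = h(x), if a
nonnegative differentiable storage function `V` with `V 0 = 0` satisfies the
differential dissipation inequality `∇V(x)ᵀ(f(x) + g(x)u) ≤ ω(u, ẏ)` for all
`x`, `u` (with `ẏ = ∇h(x)ᵀ(f(x) + g(x)u)`), then there exist `q ≥ 1` and
functions `L : ℝⁿ → ℝ^q`, `W : ℝⁿ → ℝ^{q×n}` realizing the algebraic
identities of Theorem 3.3, with `W(x)ᵀW(x)` equal to the symmetric part of
`R̂(x)`. -/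
theorem factorization_of_dissipation_inequality {n : ℕ}
    (f : (Fin n → ℝ) → (Fin n → ℝ))
    (g : (Fin n → ℝ) → Matrix (Fin n) (Fin n) ℝ)
    (h : (Fin n → ℝ) → (Fin n → ℝ))
    (hf0 : f 0 = 0) (hh0 : h 0 = 0)
    (Q S R : Matrix (Fin n) (Fin n) ℝ)
    (hQ : Q.IsSymm) (hR : R.IsSymm)
    (V : (Fin n → ℝ) → ℝ)
    (gradV : (Fin n → ℝ) → (Fin n → ℝ))
    (gradh : (Fin n → ℝ) → Matrix (Fin n) (Fin n) ℝ)
    (hVdiff : Differentiable ℝ V)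
    (hVgrad : ∀ x v, fderiv ℝ V x v = gradV x ⬝ᵥ v)
    (hhdiff : Differentiable ℝ h)
    (hhgrad : ∀ x v, fderiv ℝ h x v = (gradh x)ᵀ *ᵥ v)
    (hVnonneg : ∀ x, 0 ≤ V x) (hV0 : V 0 = 0)
    (hdissip : ∀ x u : Fin n → ℝ,
      gradV x ⬝ᵥ (f x + g x *ᵥ u) ≤
        ((gradh x)ᵀ *ᵥ (f x + g x *ᵥ u)) ⬝ᵥ (Q *ᵥ ((gradh x)ᵀ *ᵥ (f x + g x *ᵥ u)))
          + 2 * (((gradh x)ᵀ *ᵥ (f x + g x *ᵥ u)) ⬝ᵥ (S *ᵥ u))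
          + u ⬝ᵥ (R *ᵥ u)) :
    ∃ q : ℕ, 1 ≤ q ∧
      ∃ (L : (Fin n → ℝ) → (Fin q → ℝ)) (W : (Fin n → ℝ) → Matrix (Fin q) (Fin n) ℝ),
        ∀ x : Fin n → ℝ,
          -- (i)  (1/2) g(x)ᵀ∇V(x) = Ŝ(x)ᵀ f(x) − W(x)ᵀ L(x)
          (1/2 : ℝ) • ((g x)ᵀ *ᵥ gradV x)
              = (gradh x * Q * (gradh x)ᵀ * g x + gradh x * S)ᵀ *ᵥ f x - (W x)ᵀ *ᵥ L x
          -- (ii) ∇V(x)ᵀ f(x) = f(x)ᵀ ∇h(x) Q ∇h(x)ᵀ f(x) − L(x)ᵀ L(x)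
          ∧ gradV x ⬝ᵥ f x
              = f x ⬝ᵥ ((gradh x * Q * (gradh x)ᵀ) *ᵥ f x) - L x ⬝ᵥ L x
          -- (iii) W(x)ᵀ W(x) = symmetric part of R̂(x)
          ∧ (W x)ᵀ * W x
              = (1/2 : ℝ) •
                ((g x)ᵀ * gradh x * Q * (gradh x)ᵀ * g x
                    + (2 : ℝ) • ((g x)ᵀ * gradh x * S) + R
                  + ((g x)ᵀ * gradh x * Q * (gradh x)ᵀ * g x
                    + (2 : ℝ) • ((g x)ᵀ * gradh x * S) + R)ᵀ) := by
  have hQ' : Qᵀ = Q := hQ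
  have hex : ∀ x : Fin n → ℝ, ∃ B : Matrix (Fin (n+1)) (Fin (n+1)) ℝ,
      (∑ k, B k 0 * B k 0)
        = f x ⬝ᵥ ((gradh x * Q * (gradh x)ᵀ) *ᵥ f x) - gradV x ⬝ᵥ f x ∧
      (∀ j : Fin n, (∑ k, B k j.succ * B k 0)
        = (((gradh x * Q * (gradh x)ᵀ * g x + gradh x * S)ᵀ *ᵥ f x)
            - (1/2 : ℝ) • ((g x)ᵀ *ᵥ gradV x)) j) ∧
      (∀ i j : Fin n, (∑ k, B k i.succ * B k j.succ)
        = ((1/2 : ℝ) • (((g x)ᵀ * gradh x * Q * (gradh x)ᵀ * g x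
              + (2:ℝ) • ((g x)ᵀ * gradh x * S) + R)
            + ((g x)ᵀ * gradh x * Q * (gradh x)ᵀ * g x
              + (2:ℝ) • ((g x)ᵀ * gradh x * S) + R)ᵀ)) i j) := by
    intro x
    obtain ⟨B, h0, h1, h2⟩ := exists_factorization
      (f x ⬝ᵥ ((gradh x * Q * (gradh x)ᵀ) *ᵥ f x) - gradV x ⬝ᵥ f x)
      (((gradh x * Q * (gradh x)ᵀ * g x + gradh x * S)ᵀ *ᵥ f x)
          - (1/2 : ℝ) • ((g x)ᵀ *ᵥ gradV x))
      ((1/2 : ℝ) • (((g x)ᵀ * gradh x * Q * (gradh x)ᵀ * g x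
            + (2:ℝ) • ((g x)ᵀ * gradh x * S) + R)
          + ((g x)ᵀ * gradh x * Q * (gradh x)ᵀ * g x
            + (2:ℝ) • ((g x)ᵀ * gradh x * S) + R)ᵀ))
      (by
        simp only [Matrix.transpose_smul, Matrix.transpose_add, Matrix.transpose_transpose]
        exact congrArg (fun Y => (1/2 : ℝ) • Y) (add_comm _ _))
      (by
        intro u
        have h1 := hdissip x u
        have h2 := expand_eq (f x) (gradV x) u (g x) (gradh x) Q S R hQ'
        linarith)
    exact ⟨B, h0, fun j => h1 j, fun i j => h2 i j⟩
  choose B hB0 hB1 hB2 using hex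
  refine ⟨n+1, Nat.le_add_left 1 n, fun x i => B x i 0,
    fun x => Matrix.of (fun i j => B x i (j.succ)), fun x => ⟨?_, ?_, ?_⟩⟩
  · funext j
    have hb := hB1 x j
    simp only [Pi.sub_apply, Pi.smul_apply, smul_eq_mul] at hb ⊢
    have hW : ((Matrix.of (fun i (j : Fin n) => B x i (j.succ)))ᵀ *ᵥ (fun i => B x i 0)) j
        = ∑ k, B x k j.succ * B x k 0 := by
      simp [Matrix.mulVec, dotProduct, Matrix.transpose_apply, mul_comm]
    rw [hW, hb]
    ring
  · have hd : (fun i => B x i 0) ⬝ᵥ (fun i => B x i 0) = ∑ k, B x k 0 * B x k 0 := rfl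
    rw [hd, hB0 x]
    ring
  · ext i j
    have hb := hB2 x i j
    simp only [Matrix.mul_apply, Matrix.transpose_apply, Matrix.of_apply]
    exact hb
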